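/- Let 𝒜 = {A₁, …, A_L} be a dynamical generating set of N×N matrices, let χ be a Hermitian M×M complex matrix with exactly K distinct eigenvalues, and let 𝒜_[L] = {A_i ⊗ I_M : i ∈ [L]} ∪ {A_i ⊗ χ : i ∈ [L]}. Then the center of the DLA generated by 𝒜_[L] satisfies Z(g_{𝒜_[L]}) = span_ℝ{C ⊗ I_M : C ∈ Z(g_𝒜)} + span_ℝ{C ⊗ χ : C ∈ Z(g_𝒜)}. -/

import Mathlib

open Matrix Kronecker

attribute [local instance 100] LieRing.ofAssociativeRing

/-- A *dynamical generating set*: a family of at least two ℝ-linearly independent,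
traceless, anti-Hermitian complex matrices of a common size. -/
def IsDynGenSet {l N : ℕ} (A : Fin l → Matrix (Fin N) (Fin N) ℂ) : Prop :=
  2 ≤ l ∧ LinearIndependent ℝ A ∧ (∀ i, Matrix.trace (A i) = 0) ∧ (∀ i, (A i)ᴴ = -(A i))

/-- The dynamical Lie algebra generated by a set of matrices: the smallest real Lie
subalgebra of the matrix Lie algebra (bracket `[A,B] = AB - BA`) containing the set. -/
noncomputable def DLA {n : Type*} [Fintype n] [DecidableEq n] (S : Set (Matrix n n ℂ)) :
    LieSubalgebra ℝ (Matrix n n ℂ) :=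
  LieSubalgebra.lieSpan ℝ (Matrix n n ℂ) S

/-- The commutator subalgebra `[g,g]`, as the ℝ-linear span of brackets of elements of `g`. -/
noncomputable def commSub {n : Type*} [Fintype n] [DecidableEq n]
    (g : LieSubalgebra ℝ (Matrix n n ℂ)) : Submodule ℝ (Matrix n n ℂ) :=
  Submodule.span ℝ {x | ∃ u ∈ g, ∃ v ∈ g, x = ⁅u, v⁆}

/-- The center `Z(g) = {u ∈ g : [u,v] = 0 for all v ∈ g}`, as an ℝ-submodule. -/
noncomputable def centerSubmodule {n : Type*} [Fintype n] [DecidableEq n]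
    (g : LieSubalgebra ℝ (Matrix n n ℂ)) : Submodule ℝ (Matrix n n ℂ) where
  carrier := {u | u ∈ g ∧ ∀ v ∈ g, ⁅u, v⁆ = 0}
  add_mem' := by
    rintro a b ⟨ha, ha'⟩ ⟨hb, hb'⟩
    exact ⟨g.add_mem ha hb, fun v hv => by rw [add_lie, ha' v hv, hb' v hv, add_zero]⟩
  zero_mem' := ⟨g.zero_mem, fun v _ => zero_lie v⟩
  smul_mem' := by
    rintro c a ⟨ha, ha'⟩
    exact ⟨g.smul_mem c ha, fun v hv => by rw [smul_lie, ha' v hv, smul_zero]⟩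

/- ========================= auxiliary material ========================= -/

section Aux

variable {n m : Type*} [Fintype n] [DecidableEq n] [Fintype m] [DecidableEq m]

lemma lie_eq' (a b : Matrix n n ℂ) : ⁅a,b⁆ = a*b - b*a := Ring.lie_def a b

omit [Fintype n] [DecidableEq n] in
/-- decomposition of complex smul into real parts -/
lemma csmul_decomp (c : ℂ) (v : Matrix n m ℂ) :
    c • v = c.re • v + Complex.I • (c.im • v) := by
  have h1 : (c.re : ℂ) • v = c.re • v := algebraMap_smul ℂ c.re v
  have h2 : (c.im : ℂ) • v = c.im • v := algebraMap_smul ℂ c.im v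
  calc c • v = ((c.re : ℂ) + (c.im : ℂ) * Complex.I) • v := by rw [Complex.re_add_im]
    _ = (c.re : ℂ) • v + ((c.im : ℂ) * Complex.I) • v := add_smul _ _ _
    _ = c.re • v + Complex.I • ((c.im:ℂ) • v) := by
        rw [h1, mul_comm, mul_smul]
    _ = c.re • v + Complex.I • (c.im • v) := by rw [h2]

omit [Fintype n] [DecidableEq n] in
/-- elements of the ℂ-span of a real submodule decompose as `a + I • b` -/
lemma mem_cspan (W : Submodule ℝ (Matrix n m ℂ)) (x : Matrix n m ℂ)
    (hx : x ∈ Submodule.span ℂ (W : Set (Matrix n m ℂ))) :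
    ∃ a ∈ W, ∃ b ∈ W, x = a + Complex.I • b := by
  induction hx using Submodule.span_induction with
  | mem y hy => exact ⟨y, hy, 0, W.zero_mem, by simp⟩
  | zero => exact ⟨0, W.zero_mem, 0, W.zero_mem, by simp⟩
  | add y z _ _ hy hz =>
      obtain ⟨a, ha, b, hb, rfl⟩ := hy
      obtain ⟨a', ha', b', hb', rfl⟩ := hz
      exact ⟨a + a', W.add_mem ha ha', b + b', W.add_mem hb hb', by
        rw [smul_add]; abel⟩
  | smul c y _ hy =>
      obtain ⟨a, ha, b, hb, rfl⟩ := hy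
      refine ⟨c.re • a - c.im • b, W.sub_mem (W.smul_mem _ ha) (W.smul_mem _ hb),
        c.im • a + c.re • b, W.add_mem (W.smul_mem _ ha) (W.smul_mem _ hb), ?_⟩
      rw [smul_add, csmul_decomp c a, ← mul_smul, csmul_decomp (c * Complex.I) b]
      simp only [Complex.mul_I_re, Complex.mul_I_im]
      module

omit [Fintype n] [DecidableEq n] [Fintype m] [DecidableEq m] in
lemma kron_conjT (X : Matrix n n ℂ) (Y : Matrix m m ℂ) :
    (X ⊗ₖ Y)ᴴ = Xᴴ ⊗ₖ Yᴴ := by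
  ext ⟨a,p⟩ ⟨b,q⟩
  simp [conjTranspose_apply, kroneckerMap_apply, mul_comm]

omit [Fintype n] [DecidableEq n] in
/-- if Y + I•Z = 0 with Y, Z skew-Hermitian, then Y = 0 and Z = 0 -/
lemma antiherm_decomp (Y Z : Matrix n n ℂ) (hY : Yᴴ = -Y) (hZ : Zᴴ = -Z)
    (h : Y + Complex.I • Z = 0) : Y = 0 ∧ Z = 0 := by
  have hIZ : (Complex.I • Z)ᴴ = Complex.I • Z := by
    rw [conjTranspose_smul, hZ]
    simp
  have hconj : -Y + Complex.I • Z = 0 := by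
    have := congrArg conjTranspose h
    rwa [conjTranspose_add, hY, hIZ, conjTranspose_zero] at this
  have hY0 : Y = 0 := by
    have h2 : (Y + Complex.I • Z) - (-Y + Complex.I • Z) = 0 := by rw [h, hconj, sub_zero]
    have h2' : Y + Y = 0 := by rw [← h2]; abel
    have h3 : (2:ℂ) • Y = 0 := by rw [two_smul]; exact_mod_cast h2'
    simpa using (smul_eq_zero.mp h3).resolve_left (by norm_num)
  refine ⟨hY0, ?_⟩
  rw [hY0, zero_add] at h
  simpa using (smul_eq_zero.mp h).resolve_left Complex.I_ne_zero

omit [Fintype n] [DecidableEq n] in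
/-- ℂ-span of a set equals ℂ-span of its ℝ-span -/
lemma cspan_rspan (s : Set (Matrix n m ℂ)) :
    Submodule.span ℂ ((Submodule.span ℝ s : Submodule ℝ (Matrix n m ℂ)) : Set (Matrix n m ℂ))
      = Submodule.span ℂ s := by
  apply le_antisymm
  · rw [Submodule.span_le]
    intro x hx
    have : Submodule.span ℝ s ≤ Submodule.restrictScalars ℝ (Submodule.span ℂ s) := by
      rw [Submodule.span_le]; exact Submodule.subset_span
    exact this hx
  · exact Submodule.span_mono (fun x hx => Submodule.subset_span hx)

lemma trace_conj_self_zero (x : Matrix n n ℂ) (h : Matrix.trace (xᴴ * x) = 0) : x = 0 := by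
  have h2 : ∑ i, ∑ j, Complex.normSq (x j i) = 0 := by
    have h1 := congrArg Complex.re h
    simp only [Matrix.trace, Matrix.diag, Matrix.mul_apply, Matrix.conjTranspose_apply,
      Complex.re_sum, Complex.zero_re] at h1
    rw [← h1]
    refine Finset.sum_congr rfl fun i _ => Finset.sum_congr rfl fun j _ => ?_
    simp [Complex.normSq_apply, Complex.mul_re]
  ext i j
  have h3 := (Finset.sum_eq_zero_iff_of_nonneg (fun i _ => Finset.sum_nonneg
    (fun j _ => Complex.normSq_nonneg (x j i)))).mp h2 j (Finset.mem_univ _)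
  have h4 := (Finset.sum_eq_zero_iff_of_nonneg
    (fun k _ => Complex.normSq_nonneg (x k j))).mp h3 i (Finset.mem_univ _)
  simpa using Complex.normSq_eq_zero.mp h4

/-- skew-Hermitian matrices form a real Lie subalgebra -/
def skewLie (n : Type*) [Fintype n] [DecidableEq n] : LieSubalgebra ℝ (Matrix n n ℂ) where
  carrier := {x | xᴴ = -x}
  add_mem' := by
    intro a b ha hb
    simp only [Set.mem_setOf_eq] at *
    rw [conjTranspose_add, ha, hb, neg_add]
  zero_mem' := by simp
  smul_mem' := by
    intro c a ha
    simp only [Set.mem_setOf_eq] at *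
    rw [conjTranspose_smul, ha]
    simp [star_trivial]
  lie_mem' := by
    intro a b ha hb
    simp only [Set.mem_setOf_eq] at *
    rw [lie_eq', conjTranspose_sub, conjTranspose_mul, conjTranspose_mul, ha, hb]
    simp only [Matrix.neg_mul, Matrix.mul_neg, neg_neg]
    abel

lemma dla_skew {S : Set (Matrix n n ℂ)} (hS : ∀ x ∈ S, xᴴ = -x) :
    ∀ x ∈ DLA S, xᴴ = -x := by
  intro x hx
  have : DLA S ≤ skewLie n := (LieSubalgebra.lieSpan_le).mpr hS
  exact this hx

/-- centralizer of u is a Lie subalgebra -/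
def centralizerLie (u : Matrix n n ℂ) : LieSubalgebra ℝ (Matrix n n ℂ) where
  carrier := {v | ⁅u, v⁆ = 0}
  add_mem' := by intro a b ha hb; simp only [Set.mem_setOf_eq] at *; rw [lie_add, ha, hb, add_zero]
  zero_mem' := by simp
  smul_mem' := by intro c a ha; simp only [Set.mem_setOf_eq] at *; rw [lie_smul, ha, smul_zero]
  lie_mem' := by
    intro a b ha hb
    simp only [Set.mem_setOf_eq] at *
    rw [leibniz_lie, ha, hb, zero_lie, lie_zero, add_zero]

lemma dla_central {S : Set (Matrix n n ℂ)} {u : Matrix n n ℂ}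
    (hS : ∀ x ∈ S, ⁅u, x⁆ = 0) : ∀ v ∈ DLA S, ⁅u, v⁆ = 0 := by
  intro v hv
  have : DLA S ≤ centralizerLie u := (LieSubalgebra.lieSpan_le).mpr hS
  exact this hv

/-- an element of the center which is a combination of commutators is zero -/
lemma center_inter_comm (g : LieSubalgebra ℝ (Matrix n n ℂ)) (hskew : ∀ x ∈ g, xᴴ = -x)
    (x : Matrix n n ℂ) (hxc : x ∈ centerSubmodule g) (hxm : x ∈ commSub g) : x = 0 := by
  have hxg : x ∈ g := hxc.1
  have hxH : xᴴ = -x := hskew x hxg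
  have key : ∀ y ∈ commSub g, Matrix.trace (xᴴ * y) = 0 := by
    intro y hy
    induction hy using Submodule.span_induction with
    | mem y hy =>
        obtain ⟨u, hu, v, hv, rfl⟩ := hy
        have hxu : x * u = u * x := by
          have h := hxc.2 u hu
          rw [lie_eq'] at h
          exact sub_eq_zero.mp h
        rw [lie_eq', hxH]
        rw [Matrix.mul_sub, Matrix.trace_sub]
        have e1 : -x * (u * v) = -(x * u * v) := by noncomm_ring
        have e2 : -x * (v * u) = -(x * v * u) := by noncomm_ring
        rw [e1, e2, Matrix.trace_neg, Matrix.trace_neg]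
        have e3 : Matrix.trace (x * u * v) = Matrix.trace (x * v * u) := by
          rw [hxu, Matrix.mul_assoc, Matrix.trace_mul_comm]
        rw [e3]
        ring
    | zero => simp
    | add a b _ _ ha hb => rw [Matrix.mul_add, Matrix.trace_add, ha, hb, add_zero]
    | smul c a _ ha => rw [Matrix.mul_smul, Matrix.trace_smul, ha, smul_zero]
  exact trace_conj_self_zero x (key x hxm)

/-- existence of a ℂ-linear projection fixing Z and killing M, for disjoint Z, M -/
lemma proj_exists {V : Type*} [AddCommGroup V] [Module ℂ V]
    (Z W : Submodule ℂ V) (h : Disjoint Z W) :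
    ∃ f : V →ₗ[ℂ] V, (∀ x ∈ Z, f x = x) ∧ (∀ x ∈ W, f x = 0) ∧ (∀ x, f x ∈ Z) := by
  obtain ⟨F, hF⟩ := Submodule.exists_isCompl (Z ⊔ W)
  have hcompl : IsCompl Z (W ⊔ F) := by
    constructor
    · rw [Submodule.disjoint_def]
      intro x hxZ hxMF
      obtain ⟨w, hw, f, hf, hsum⟩ := Submodule.mem_sup.mp hxMF
      have hfmem : f ∈ Z ⊔ W := by
        have : f = x - w := by rw [← hsum]; abel
        rw [this]
        exact Submodule.sub_mem _ (Submodule.mem_sup_left hxZ) (Submodule.mem_sup_right hw)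
      have hf0 : f = 0 := Submodule.disjoint_def.mp hF.disjoint f hfmem hf
      have hxw : x = w := by rw [← hsum, hf0, add_zero]
      exact Submodule.disjoint_def.mp h x hxZ (hxw ▸ hw)
    · rw [codisjoint_iff, ← sup_assoc]
      exact codisjoint_iff.mp hF.codisjoint
  refine ⟨Z.subtype.comp (Z.projectionOnto (W ⊔ F) hcompl), ?_, ?_, ?_⟩
  · intro x hx
    have := Submodule.projectionOnto_apply_left hcompl ⟨x, hx⟩
    simp [this]
  · intro x hx
    have := (Submodule.projectionOnto_apply_eq_zero_iff hcompl).mpr (Submodule.mem_sup_left hx)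
    simp [this]
  · intro x
    exact (Z.projectionOnto (W ⊔ F) hcompl x).2

end Aux

set_option linter.unusedSectionVars false

/- ===================== Kronecker block machinery ===================== -/

section Blocks

variable {N M : ℕ}

lemma lie_kron (X Y : Matrix (Fin N) (Fin N) ℂ) (p q : Matrix (Fin M) (Fin M) ℂ)
    (hpq : p * q = q * p) :
    ⁅X ⊗ₖ p, Y ⊗ₖ q⁆ = ⁅X, Y⁆ ⊗ₖ (p * q) := by
  rw [lie_eq', lie_eq', ← mul_kronecker_mul, ← mul_kronecker_mul, hpq]
  ext ⟨a,r⟩ ⟨b,s⟩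
  simp [kroneckerMap_apply, Matrix.sub_apply]
  ring

noncomputable def blk (p q : Fin M) :
    Matrix (Fin N × Fin M) (Fin N × Fin M) ℂ →ₗ[ℂ] Matrix (Fin N) (Fin N) ℂ where
  toFun V := Matrix.of fun a b => V (a,p) (b,q)
  map_add' := by intros; ext; simp
  map_smul' := by intros; ext; simp

lemma blk_apply (p q : Fin M) (V : Matrix (Fin N × Fin M) (Fin N × Fin M) ℂ) (a b : Fin N) :
    blk p q V a b = V (a,p) (b,q) := rfl

lemma blk_real_smul (p q : Fin M) (r : ℝ) (V : Matrix (Fin N × Fin M) (Fin N × Fin M) ℂ) :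
    blk p q (r • V) = r • blk p q V := by
  ext a b; simp [blk_apply]

lemma blk_kron (p q : Fin M) (X : Matrix (Fin N) (Fin N) ℂ) (Y : Matrix (Fin M) (Fin M) ℂ) :
    blk p q (X ⊗ₖ Y) = Y p q • X := by
  ext a b; simp [blk_apply, kroneckerMap_apply, mul_comm]

lemma blk_mul_right (p q : Fin M) (V : Matrix (Fin N × Fin M) (Fin N × Fin M) ℂ)
    (X : Matrix (Fin N) (Fin N) ℂ) :
    blk p q (V * (X ⊗ₖ (1 : Matrix (Fin M) (Fin M) ℂ))) = blk p q V * X := by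
  ext a b
  simp only [blk_apply, Matrix.mul_apply, kroneckerMap_apply, Fintype.sum_prod_type]
  rw [Finset.sum_comm]
  simp [Matrix.one_apply]

lemma blk_mul_left (p q : Fin M) (V : Matrix (Fin N × Fin M) (Fin N × Fin M) ℂ)
    (X : Matrix (Fin N) (Fin N) ℂ) :
    blk p q ((X ⊗ₖ (1 : Matrix (Fin M) (Fin M) ℂ)) * V) = X * blk p q V := by
  ext a b
  simp only [blk_apply, Matrix.mul_apply, kroneckerMap_apply, Fintype.sum_prod_type]
  simp [Matrix.one_apply]

lemma blk_lie (p q : Fin M) (V : Matrix (Fin N × Fin M) (Fin N × Fin M) ℂ)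
    (X : Matrix (Fin N) (Fin N) ℂ) :
    blk p q ⁅V, X ⊗ₖ (1 : Matrix (Fin M) (Fin M) ℂ)⁆ = ⁅blk p q V, X⁆ := by
  rw [lie_eq', lie_eq', map_sub, blk_mul_right, blk_mul_left]

/-- apply a ℂ-linear map blockwise -/
noncomputable def PiMap (f : Matrix (Fin N) (Fin N) ℂ →ₗ[ℂ] Matrix (Fin N) (Fin N) ℂ) :
    Matrix (Fin N × Fin M) (Fin N × Fin M) ℂ →ₗ[ℝ] Matrix (Fin N × Fin M) (Fin N × Fin M) ℂ where
  toFun V := Matrix.of fun x y => f (blk x.2 y.2 V) x.1 y.1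
  map_add' := by
    intro V W
    ext ⟨a,p⟩ ⟨b,q⟩
    simp [Matrix.add_apply]
  map_smul' := by
    intro r V
    ext ⟨a,p⟩ ⟨b,q⟩
    simp only [Matrix.of_apply, RingHom.id_apply, Matrix.smul_apply]
    rw [blk_real_smul, LinearMap.map_smul_of_tower]
    simp

lemma PiMap_apply (f : Matrix (Fin N) (Fin N) ℂ →ₗ[ℂ] Matrix (Fin N) (Fin N) ℂ)
    (V : Matrix (Fin N × Fin M) (Fin N × Fin M) ℂ) (a b : Fin N) (p q : Fin M) :
    PiMap f V (a,p) (b,q) = f (blk p q V) a b := rfl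

lemma PiMap_kron (f : Matrix (Fin N) (Fin N) ℂ →ₗ[ℂ] Matrix (Fin N) (Fin N) ℂ)
    (X : Matrix (Fin N) (Fin N) ℂ) (Y : Matrix (Fin M) (Fin M) ℂ) :
    PiMap f (X ⊗ₖ Y) = (f X) ⊗ₖ Y := by
  ext ⟨a,p⟩ ⟨b,q⟩
  rw [PiMap_apply, blk_kron, _root_.map_smul]
  simp [kroneckerMap_apply, mul_comm]

lemma PiMap_eq_self (f : Matrix (Fin N) (Fin N) ℂ →ₗ[ℂ] Matrix (Fin N) (Fin N) ℂ)
    (V : Matrix (Fin N × Fin M) (Fin N × Fin M) ℂ)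
    (h : ∀ p q, f (blk p q V) = blk p q V) : PiMap f V = V := by
  ext ⟨a,p⟩ ⟨b,q⟩
  rw [PiMap_apply, h]
  rfl

end Blocks

/- ===================== span of powers and big algebra ===================== -/

section Main

variable {l N M : ℕ} (A : Fin l → Matrix (Fin N) (Fin N) ℂ) (χ : Matrix (Fin M) (Fin M) ℂ)

/-- real span of powers of χ -/
noncomputable def Ppow : Submodule ℝ (Matrix (Fin M) (Fin M) ℂ) :=
  Submodule.span ℝ (Set.range fun k : ℕ => χ^k)

lemma Ppow_one : (1 : Matrix (Fin M) (Fin M) ℂ) ∈ Ppow χ :=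
  Submodule.subset_span ⟨0, pow_zero χ⟩

lemma Ppow_chi : χ ∈ Ppow χ := Submodule.subset_span ⟨1, pow_one χ⟩

lemma Ppow_mul : ∀ p ∈ Ppow χ, ∀ q ∈ Ppow χ, p * q ∈ Ppow χ ∧ p * q = q * p := by
  intro p hp
  induction hp using Submodule.span_induction with
  | mem x hx =>
      obtain ⟨j, rfl⟩ := hx
      intro q hq
      induction hq using Submodule.span_induction with
      | mem y hy =>
          obtain ⟨k, rfl⟩ := hy
          constructor
          · rw [← pow_add]; exact Submodule.subset_span ⟨j+k, rfl⟩
          · rw [← pow_add, ← pow_add, add_comm]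
      | zero => simp
      | add a b ha hb iha ihb =>
          rw [Matrix.mul_add, Matrix.add_mul]
          exact ⟨(Ppow χ).add_mem iha.1 ihb.1, by rw [iha.2, ihb.2]⟩
      | smul c a ha iha =>
          rw [Matrix.mul_smul, Matrix.smul_mul]
          exact ⟨(Ppow χ).smul_mem c iha.1, by rw [iha.2]⟩
  | zero => intro q hq; simp
  | add a b ha hb iha ihb =>
      intro q hq
      rw [Matrix.add_mul, Matrix.mul_add]
      exact ⟨(Ppow χ).add_mem (iha q hq).1 (ihb q hq).1, by rw [(iha q hq).2, (ihb q hq).2]⟩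
  | smul c a ha iha =>
      intro q hq
      rw [Matrix.smul_mul, Matrix.mul_smul]
      exact ⟨(Ppow χ).smul_mem c (iha q hq).1, by rw [(iha q hq).2]⟩

/-- real span of X ⊗ p with X ∈ g_A and p in the span of powers of χ -/
noncomputable def GsubM : Submodule ℝ (Matrix (Fin N × Fin M) (Fin N × Fin M) ℂ) :=
  Submodule.span ℝ {v | ∃ X ∈ DLA (Set.range A), ∃ p ∈ Ppow χ, v = X ⊗ₖ p}

lemma GsubM_lie : ∀ v ∈ GsubM A χ, ∀ w ∈ GsubM A χ, ⁅v, w⁆ ∈ GsubM A χ := by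
  intro v hv
  induction hv using Submodule.span_induction with
  | mem x hx =>
      obtain ⟨X, hX, p, hp, rfl⟩ := hx
      intro w hw
      induction hw using Submodule.span_induction with
      | mem y hy =>
          obtain ⟨Y, hY, q, hq, rfl⟩ := hy
          rw [lie_kron X Y p q (Ppow_mul χ p hp q hq).2]
          exact Submodule.subset_span
            ⟨⁅X, Y⁆, (DLA (Set.range A)).lie_mem hX hY, p * q, (Ppow_mul χ p hp q hq).1, rfl⟩
      | zero => rw [lie_zero]; exact (GsubM A χ).zero_mem
      | add a b ha hb iha ihb => rw [lie_add]; exact (GsubM A χ).add_mem iha ihb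
      | smul c a ha iha => rw [lie_smul]; exact (GsubM A χ).smul_mem c iha
  | zero => intro w hw; rw [zero_lie]; exact (GsubM A χ).zero_mem
  | add a b ha hb iha ihb =>
      intro w hw; rw [add_lie]; exact (GsubM A χ).add_mem (iha w hw) (ihb w hw)
  | smul c a ha iha =>
      intro w hw; rw [smul_lie]; exact (GsubM A χ).smul_mem c (iha w hw)

/-- GsubM as a Lie subalgebra -/
noncomputable def GsubLie : LieSubalgebra ℝ (Matrix (Fin N × Fin M) (Fin N × Fin M) ℂ) :=
  { GsubM A χ with
    lie_mem' := fun {x y} hx hy => GsubM_lie A χ x hx y hy }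

lemma GsubLie_mem_iff (v : Matrix (Fin N × Fin M) (Fin N × Fin M) ℂ) :
    v ∈ GsubLie A χ ↔ v ∈ GsubM A χ := Iff.rfl

end Main

/- ===================== membership lemmas ===================== -/

section Main2

variable {l N M : ℕ} (A : Fin l → Matrix (Fin N) (Fin N) ℂ) (χ : Matrix (Fin M) (Fin M) ℂ)

lemma neg_kron (X : Matrix (Fin N) (Fin N) ℂ) (Y : Matrix (Fin M) (Fin M) ℂ) :
    (-X) ⊗ₖ Y = -(X ⊗ₖ Y) := by
  ext ⟨a,p⟩ ⟨b,q⟩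
  simp [kroneckerMap_apply]

lemma kron_mem_bigG :
    ∀ X ∈ DLA (Set.range A),
      X ⊗ₖ (1 : Matrix (Fin M) (Fin M) ℂ) ∈
          DLA ((Set.range fun i => A i ⊗ₖ (1 : Matrix (Fin M) (Fin M) ℂ)) ∪
            (Set.range fun i => A i ⊗ₖ χ)) ∧
        X ⊗ₖ χ ∈
          DLA ((Set.range fun i => A i ⊗ₖ (1 : Matrix (Fin M) (Fin M) ℂ)) ∪
            (Set.range fun i => A i ⊗ₖ χ)) := by
  set g := DLA ((Set.range fun i => A i ⊗ₖ (1 : Matrix (Fin M) (Fin M) ℂ)) ∪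
    (Set.range fun i => A i ⊗ₖ χ)) with hg
  let h0 : LieSubalgebra ℝ (Matrix (Fin N) (Fin N) ℂ) :=
  { carrier := {X | X ⊗ₖ (1 : Matrix (Fin M) (Fin M) ℂ) ∈ g ∧ X ⊗ₖ χ ∈ g}
    add_mem' := fun {a b} ha hb =>
      ⟨by rw [add_kronecker]; exact g.add_mem ha.1 hb.1,
       by rw [add_kronecker]; exact g.add_mem ha.2 hb.2⟩
    zero_mem' := ⟨by rw [zero_kronecker]; exact g.zero_mem,
                  by rw [zero_kronecker]; exact g.zero_mem⟩
    smul_mem' := fun c a ha =>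
      ⟨by rw [smul_kronecker]; exact g.smul_mem c ha.1,
       by rw [smul_kronecker]; exact g.smul_mem c ha.2⟩
    lie_mem' := fun {a b} ha hb => by
      constructor
      · have e := lie_kron a b (1 : Matrix (Fin M) (Fin M) ℂ) 1 (by rw [one_mul])
        rw [one_mul] at e
        rw [← e]
        exact g.lie_mem ha.1 hb.1
      · have e := lie_kron a b (1 : Matrix (Fin M) (Fin M) ℂ) χ (by rw [one_mul, mul_one])
        rw [one_mul] at e
        rw [← e]
        exact g.lie_mem ha.1 hb.2 }
  have hle : DLA (Set.range A) ≤ h0 := by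
    apply LieSubalgebra.lieSpan_le.mpr
    rintro x ⟨i, rfl⟩
    exact ⟨LieSubalgebra.subset_lieSpan (Set.mem_union_left _ ⟨i, rfl⟩),
           LieSubalgebra.subset_lieSpan (Set.mem_union_right _ ⟨i, rfl⟩)⟩
  exact fun X hX => hle hX

lemma bigG_le_GsubM :
    ∀ v ∈ DLA ((Set.range fun i => A i ⊗ₖ (1 : Matrix (Fin M) (Fin M) ℂ)) ∪
        (Set.range fun i => A i ⊗ₖ χ)), v ∈ GsubM A χ := by
  intro v hv
  have hle : DLA ((Set.range fun i => A i ⊗ₖ (1 : Matrix (Fin M) (Fin M) ℂ)) ∪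
      (Set.range fun i => A i ⊗ₖ χ)) ≤ GsubLie A χ := by
    apply LieSubalgebra.lieSpan_le.mpr
    rintro x (⟨i, rfl⟩ | ⟨i, rfl⟩)
    · exact Submodule.subset_span
        ⟨A i, LieSubalgebra.subset_lieSpan ⟨i, rfl⟩, 1, Ppow_one χ, rfl⟩
    · exact Submodule.subset_span
        ⟨A i, LieSubalgebra.subset_lieSpan ⟨i, rfl⟩, χ, Ppow_chi χ, rfl⟩
  exact hle hv

lemma blk_mem_cspan :
    ∀ V ∈ GsubM A χ, ∀ p q,
      blk p q V ∈ Submodule.span ℂ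
        (((DLA (Set.range A)).toSubmodule : Submodule ℝ (Matrix (Fin N) (Fin N) ℂ)) :
          Set (Matrix (Fin N) (Fin N) ℂ)) := by
  intro V hV
  induction hV using Submodule.span_induction with
  | mem x hx =>
      obtain ⟨X, hX, p', hp', rfl⟩ := hx
      intro p q
      rw [blk_kron]
      exact Submodule.smul_mem _ _ (Submodule.subset_span hX)
  | zero => intro p q; rw [map_zero]; exact Submodule.zero_mem _
  | add a b ha hb iha ihb =>
      intro p q; rw [map_add]; exact Submodule.add_mem _ (iha p q) (ihb p q)
  | smul r a ha iha =>
      intro p q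
      rw [blk_real_smul]
      rw [show r • blk p q a = ((r : ℂ)) • blk p q a from (algebraMap_smul ℂ r _).symm]
      exact Submodule.smul_mem _ _ (iha p q)

lemma PiZero (f : Matrix (Fin N) (Fin N) ℂ →ₗ[ℂ] Matrix (Fin N) (Fin N) ℂ)
    (hf : ∀ u ∈ DLA (Set.range A), ∀ v ∈ DLA (Set.range A), f ⁅u, v⁆ = 0) :
    ∀ v ∈ GsubM A χ, ∀ w ∈ GsubM A χ, PiMap f ⁅v, w⁆ = 0 := by
  intro v hv
  induction hv using Submodule.span_induction with
  | mem x hx =>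
      obtain ⟨X, hX, p, hp, rfl⟩ := hx
      intro w hw
      induction hw using Submodule.span_induction with
      | mem y hy =>
          obtain ⟨Y, hY, q, hq, rfl⟩ := hy
          rw [lie_kron X Y p q (Ppow_mul χ p hp q hq).2, PiMap_kron, hf X hX Y hY,
            zero_kronecker]
      | zero => rw [lie_zero, map_zero]
      | add a b ha hb iha ihb => rw [lie_add, map_add, iha, ihb, add_zero]
      | smul c a ha iha => rw [lie_smul, _root_.map_smul, iha, smul_zero]
  | zero => intro w hw; rw [zero_lie, map_zero]
  | add a b ha hb iha ihb =>
      intro w hw; rw [add_lie, map_add, iha w hw, ihb w hw, add_zero]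
  | smul c a ha iha =>
      intro w hw; rw [smul_lie, _root_.map_smul, iha w hw, smul_zero]

end Main2

/- ===================== the main theorem ===================== -/

theorem stmt11 {l N M K : ℕ} (A : Fin l → Matrix (Fin N) (Fin N) ℂ)
    (hA : IsDynGenSet A)
    (χ : Matrix (Fin M) (Fin M) ℂ) (hχ : χ.IsHermitian)
    (hK : (spectrum ℂ χ).ncard = K) :
    centerSubmodule (DLA ((Set.range fun i => A i ⊗ₖ (1 : Matrix (Fin M) (Fin M) ℂ)) ∪
        (Set.range fun i => A i ⊗ₖ χ))) =
      Submodule.span ℝ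
          ((fun C => C ⊗ₖ (1 : Matrix (Fin M) (Fin M) ℂ)) ''
            (centerSubmodule (DLA (Set.range A)) : Set (Matrix (Fin N) (Fin N) ℂ))) ⊔
        Submodule.span ℝ
          ((fun C => C ⊗ₖ χ) ''
            (centerSubmodule (DLA (Set.range A)) : Set (Matrix (Fin N) (Fin N) ℂ))) := by
  classical
  set gA := DLA (Set.range A) with hgAdef
  set z := centerSubmodule (DLA (Set.range A)) with hzdef
  set g := DLA ((Set.range fun i => A i ⊗ₖ (1 : Matrix (Fin M) (Fin M) ℂ)) ∪
      (Set.range fun i => A i ⊗ₖ χ)) with hgdef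
  have hχH : χᴴ = χ := hχ
  have hskewA : ∀ x ∈ Set.range A, xᴴ = -x := by rintro x ⟨i, rfl⟩; exact hA.2.2.2 i
  have hgA_skew : ∀ x ∈ gA, xᴴ = -x := dla_skew hskewA
  have hAi_mem : ∀ i, A i ∈ gA := fun i => LieSubalgebra.subset_lieSpan ⟨i, rfl⟩
  have hkron_mem := kron_mem_bigG A χ
  -- generators of g are skew-Hermitian
  have hgen_skew : ∀ x ∈ ((Set.range fun i => A i ⊗ₖ (1 : Matrix (Fin M) (Fin M) ℂ)) ∪
      (Set.range fun i => A i ⊗ₖ χ)), xᴴ = -x := by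
    rintro x (⟨i, rfl⟩ | ⟨i, rfl⟩)
    · rw [kron_conjT, hA.2.2.2 i, conjTranspose_one, neg_kron]
    · rw [kron_conjT, hA.2.2.2 i, hχH, neg_kron]
  have hg_skew : ∀ x ∈ g, xᴴ = -x := dla_skew hgen_skew
  apply le_antisymm
  · -- hard direction: center of big DLA is contained in the spans
    intro U hU
    obtain ⟨hUg, hUc⟩ := hU
    -- the complex spans
    set zC : Submodule ℂ (Matrix (Fin N) (Fin N) ℂ) :=
      Submodule.span ℂ ((z : Submodule ℝ _) : Set (Matrix (Fin N) (Fin N) ℂ)) with hzC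
    set mC : Submodule ℂ (Matrix (Fin N) (Fin N) ℂ) :=
      Submodule.span ℂ {x | ∃ u ∈ gA, ∃ v ∈ gA, x = ⁅u, v⁆} with hmC
    have hcomm_le : ∀ y ∈ commSub gA, y ∈ gA := by
      intro y hy
      have : commSub gA ≤ gA.toSubmodule := by
        rw [commSub, Submodule.span_le]
        rintro x ⟨u, hu, v, hv, rfl⟩
        exact gA.lie_mem hu hv
      exact this hy
    have hdisj : Disjoint zC mC := by
      rw [Submodule.disjoint_def]
      intro x hxz hxm
      obtain ⟨a, ha, b, hb, rfl⟩ := mem_cspan z x hxz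
      have hxm' : a + Complex.I • b ∈
          Submodule.span ℂ ((commSub gA : Submodule ℝ _) : Set (Matrix (Fin N) (Fin N) ℂ)) := by
        rw [commSub, cspan_rspan]
        exact hxm
      obtain ⟨c, hc, d, hd, heq⟩ := mem_cspan (commSub gA) _ hxm'
      have h0 : (a - c) + Complex.I • (b - d) = 0 := by
        rw [smul_sub]
        rw [sub_add_sub_comm, heq, sub_self]
      have hadc := antiherm_decomp (a - c) (b - d)
        (by rw [conjTranspose_sub, hgA_skew a ha.1, hgA_skew c (hcomm_le c hc), neg_sub_neg,
              neg_sub])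
        (by rw [conjTranspose_sub, hgA_skew b hb.1, hgA_skew d (hcomm_le d hd), neg_sub_neg,
              neg_sub])
        h0
      have hac : a = c := sub_eq_zero.mp hadc.1
      have hbd : b = d := sub_eq_zero.mp hadc.2
      have ha0 : a = 0 := center_inter_comm gA hgA_skew a ha (hac ▸ hc)
      have hb0 : b = 0 := center_inter_comm gA hgA_skew b hb (hbd ▸ hd)
      rw [ha0, hb0, smul_zero, add_zero]
    obtain ⟨π, hπZ, hπM, hπrange⟩ := proj_exists zC mC hdisj
    have hπm0 : ∀ u ∈ gA, ∀ v ∈ gA, π ⁅u, v⁆ = 0 := fun u hu v hv =>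
      hπM _ (Submodule.subset_span ⟨u, hu, v, hv, rfl⟩)
    -- U lies in GsubM
    have hUG : U ∈ GsubM A χ := bigG_le_GsubM A χ U hUg
    -- blocks of U are in zC
    have hblk : ∀ p q, blk p q U ∈ zC := by
      intro p q
      have h1 : blk p q U ∈ Submodule.span ℂ
          ((gA.toSubmodule : Submodule ℝ _) : Set (Matrix (Fin N) (Fin N) ℂ)) :=
        blk_mem_cspan A χ U hUG p q
      obtain ⟨a, ha, b, hb, heq⟩ := mem_cspan gA.toSubmodule _ h1
      have hcomm : ∀ X ∈ gA, ⁅blk p q U, X⁆ = 0 := by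
        intro X hX
        rw [← blk_lie]
        rw [hUc _ ((hkron_mem X hX).1), map_zero]
      have hab : ∀ X ∈ gA, ⁅a, X⁆ = 0 ∧ ⁅b, X⁆ = 0 := by
        intro X hX
        have h2 := hcomm X hX
        rw [heq, add_lie, smul_lie] at h2
        exact antiherm_decomp _ _
          ((skewLie (Fin N)).lie_mem (hgA_skew a ha) (hgA_skew X hX))
          ((skewLie (Fin N)).lie_mem (hgA_skew b hb) (hgA_skew X hX))
          h2
      have haz : a ∈ z := ⟨ha, fun v hv => (hab v hv).1⟩
      have hbz : b ∈ z := ⟨hb, fun v hv => (hab v hv).2⟩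
      rw [heq]
      exact zC.add_mem (Submodule.subset_span haz)
        (zC.smul_mem _ (Submodule.subset_span hbz))
    -- PiMap fixes U
    have hPiU : PiMap π U = U := PiMap_eq_self π U (fun p q => hπZ _ (hblk p q))
    -- the target span
    set W := Submodule.span ℝ (Set.range fun i => π (A i) ⊗ₖ (1 : Matrix (Fin M) (Fin M) ℂ)) ⊔
        Submodule.span ℝ (Set.range fun i => π (A i) ⊗ₖ χ) with hWdef
    -- Lie subalgebra forcing PiMap into W
    let hWlie : LieSubalgebra ℝ (Matrix (Fin N × Fin M) (Fin N × Fin M) ℂ) :=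
      { toSubmodule := (g.toSubmodule ⊓ GsubM A χ) ⊓ Submodule.comap (PiMap (M := M) π) W
        lie_mem' := by
          rintro x y ⟨⟨hxg, hxG⟩, hxW⟩ ⟨⟨hyg, hyG⟩, hyW⟩
          refine ⟨⟨g.lie_mem hxg hyg, GsubM_lie A χ x hxG y hyG⟩, ?_⟩
          have h0 : PiMap (M := M) π ⁅x, y⁆ = 0 := PiZero A χ π hπm0 x hxG y hyG
          show PiMap (M := M) π ⁅x, y⁆ ∈ W
          rw [h0]
          exact W.zero_mem }
    have hgle : g ≤ hWlie := by
      apply LieSubalgebra.lieSpan_le.mpr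
      rintro x (⟨i, rfl⟩ | ⟨i, rfl⟩)
      · refine ⟨⟨LieSubalgebra.subset_lieSpan (Set.mem_union_left _ ⟨i, rfl⟩),
          Submodule.subset_span ⟨A i, hAi_mem i, 1, Ppow_one χ, rfl⟩⟩, ?_⟩
        show PiMap (M := M) π (A i ⊗ₖ (1 : Matrix (Fin M) (Fin M) ℂ)) ∈ W
        rw [PiMap_kron]
        exact Submodule.mem_sup_left (Submodule.subset_span ⟨i, rfl⟩)
      · refine ⟨⟨LieSubalgebra.subset_lieSpan (Set.mem_union_right _ ⟨i, rfl⟩),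
          Submodule.subset_span ⟨A i, hAi_mem i, χ, Ppow_chi χ, rfl⟩⟩, ?_⟩
        show PiMap (M := M) π (A i ⊗ₖ χ) ∈ W
        rw [PiMap_kron]
        exact Submodule.mem_sup_right (Submodule.subset_span ⟨i, rfl⟩)
    have hUW : U ∈ W := by
      have h1 := hgle hUg
      have h2 : PiMap (M := M) π U ∈ W := h1.2
      rwa [hPiU] at h2
    -- extract coefficients
    obtain ⟨y, hy, w, hw, hyw⟩ := Submodule.mem_sup.mp hUW
    obtain ⟨r, hr⟩ := (Submodule.mem_span_range_iff_exists_fun ℝ).mp hy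
    obtain ⟨t, ht⟩ := (Submodule.mem_span_range_iff_exists_fun ℝ).mp hw
    have hdec : ∀ i, ∃ a ∈ z, ∃ b ∈ z, π (A i) = a + Complex.I • b :=
      fun i => mem_cspan z _ (hπrange (A i))
    choose c hc d hd hcd using hdec
    have e1 : ∀ i : Fin l, r i • (π (A i) ⊗ₖ (1 : Matrix (Fin M) (Fin M) ℂ)) =
        r i • (c i ⊗ₖ (1 : Matrix (Fin M) (Fin M) ℂ)) +
          Complex.I • (r i • (d i ⊗ₖ (1 : Matrix (Fin M) (Fin M) ℂ))) := by
      intro i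
      rw [hcd i, add_kronecker, smul_kronecker, smul_add, smul_comm (r i) Complex.I]
    have e2 : ∀ i : Fin l, t i • (π (A i) ⊗ₖ χ) =
        t i • (c i ⊗ₖ χ) + Complex.I • (t i • (d i ⊗ₖ χ)) := by
      intro i
      rw [hcd i, add_kronecker, smul_kronecker, smul_add, smul_comm (t i) Complex.I]
    set X1 := ∑ i, r i • (c i ⊗ₖ (1 : Matrix (Fin M) (Fin M) ℂ)) with hX1def
    set X2 := ∑ i, t i • (c i ⊗ₖ χ) with hX2def
    set Y1 := ∑ i, r i • (d i ⊗ₖ (1 : Matrix (Fin M) (Fin M) ℂ)) with hY1def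
    set Y2 := ∑ i, t i • (d i ⊗ₖ χ) with hY2def
    have hUXY : U = (X1 + X2) + Complex.I • (Y1 + Y2) := by
      rw [← hyw, ← hr, ← ht]
      rw [Finset.sum_congr rfl fun i _ => e1 i, Finset.sum_congr rfl fun i _ => e2 i]
      rw [Finset.sum_add_distrib, Finset.sum_add_distrib, ← Finset.smul_sum, ← Finset.smul_sum]
      rw [smul_add, ← hX1def, ← hX2def, ← hY1def, ← hY2def]
      abel
    -- skewness of the pieces
    have hskew1 : ∀ C ∈ z, (C ⊗ₖ (1 : Matrix (Fin M) (Fin M) ℂ))ᴴ =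
        -(C ⊗ₖ (1 : Matrix (Fin M) (Fin M) ℂ)) := fun C hC => by
      rw [kron_conjT, hgA_skew C hC.1, conjTranspose_one, neg_kron]
    have hskew2 : ∀ C ∈ z, (C ⊗ₖ χ)ᴴ = -(C ⊗ₖ χ) := fun C hC => by
      rw [kron_conjT, hgA_skew C hC.1, hχH, neg_kron]
    have hXskew : (X1 + X2)ᴴ = -(X1 + X2) := by
      have : X1 + X2 ∈ (skewLie (Fin N × Fin M)).toSubmodule :=
        Submodule.add_mem _
          (Submodule.sum_mem _ fun i _ => Submodule.smul_mem _ _ (hskew1 (c i) (hc i)))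
          (Submodule.sum_mem _ fun i _ => Submodule.smul_mem _ _ (hskew2 (c i) (hc i)))
      exact this
    have hYskew : (Y1 + Y2)ᴴ = -(Y1 + Y2) := by
      have : Y1 + Y2 ∈ (skewLie (Fin N × Fin M)).toSubmodule :=
        Submodule.add_mem _
          (Submodule.sum_mem _ fun i _ => Submodule.smul_mem _ _ (hskew1 (d i) (hd i)))
          (Submodule.sum_mem _ fun i _ => Submodule.smul_mem _ _ (hskew2 (d i) (hd i)))
      exact this
    have hUskew : Uᴴ = -U := hg_skew U hUg
    have h0 : ((X1 + X2) - U) + Complex.I • (Y1 + Y2) = 0 := by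
      rw [hUXY]; abel
    have hfin := antiherm_decomp ((X1 + X2) - U) (Y1 + Y2)
      (by rw [conjTranspose_sub, hXskew, hUskew, neg_sub_neg, neg_sub])
      hYskew h0
    have hUX : U = X1 + X2 := (sub_eq_zero.mp hfin.1).symm
    have hX1mem : X1 ∈ Submodule.span ℝ
        ((fun C => C ⊗ₖ (1 : Matrix (Fin M) (Fin M) ℂ)) ''
          (z : Set (Matrix (Fin N) (Fin N) ℂ))) :=
      Submodule.sum_mem _ fun i _ =>
        Submodule.smul_mem _ _ (Submodule.subset_span ⟨c i, hc i, rfl⟩)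
    have hX2mem : X2 ∈ Submodule.span ℝ
        ((fun C => C ⊗ₖ χ) '' (z : Set (Matrix (Fin N) (Fin N) ℂ))) :=
      Submodule.sum_mem _ fun i _ =>
        Submodule.smul_mem _ _ (Submodule.subset_span ⟨c i, hc i, rfl⟩)
    rw [hUX]
    exact Submodule.add_mem _ (Submodule.mem_sup_left hX1mem) (Submodule.mem_sup_right hX2mem)
  · -- easy direction: the spans are contained in the center
    apply sup_le
    · rw [Submodule.span_le]
      rintro x ⟨C, hC, rfl⟩
      refine ⟨(hkron_mem C hC.1).1, ?_⟩
      apply dla_central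
      rintro x (⟨i, rfl⟩ | ⟨i, rfl⟩)
      · have e := lie_kron C (A i) (1 : Matrix (Fin M) (Fin M) ℂ) 1 rfl
        rw [e, hC.2 (A i) (hAi_mem i), zero_kronecker]
      · have e := lie_kron C (A i) (1 : Matrix (Fin M) (Fin M) ℂ) χ (by rw [one_mul, mul_one])
        rw [e, hC.2 (A i) (hAi_mem i), zero_kronecker]
    · rw [Submodule.span_le]
      rintro x ⟨C, hC, rfl⟩
      refine ⟨(hkron_mem C hC.1).2, ?_⟩
      apply dla_central
      rintro x (⟨i, rfl⟩ | ⟨i, rfl⟩)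
      · have e := lie_kron C (A i) χ (1 : Matrix (Fin M) (Fin M) ℂ) (by rw [one_mul, mul_one])
        rw [e, hC.2 (A i) (hAi_mem i), zero_kronecker]
      · have e := lie_kron C (A i) χ χ rfl
        rw [e, hC.2 (A i) (hAi_mem i), zero_kronecker]
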